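/- Call an atom a of a ground HEX-program Π a cyclic input atom iff there is an atom b with b →ₑ a and a path from a to b under →ᵈ = → ∪ →⁻¹ ∪ →ₑ. If U ≠ ∅ is an unfounded set of Π with respect to a complete assignment A and U contains no cyclic input atom, then the guessing program Π̂ has a nonempty unfounded set with respect to the compatible extension Â of A. -/

import Mathlib

/-- A ground external atom: a set of input atoms and an oracle function whose
value depends only on the assignment restricted to the input atoms. -/
structure ExtAtom (Atom : Type) where
  inputs : Finset Atom
  eval : (Atom → Bool) → Bool
  dep : ∀ A B : Atom → Bool, (∀ a ∈ inputs, A a = B a) → eval A = eval B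

/-- A ground HEX-rule: head, ordinary positive body, ordinary negative body,
positive external body, negative external body. -/
structure Rule (Atom : Type) where
  head : Finset Atom
  posOrd : Finset Atom
  negOrd : Finset Atom
  posExt : List (ExtAtom Atom)
  negExt : List (ExtAtom Atom)

/-- A ground HEX-program is a set of rules (finiteness is assumed explicitly). -/
abbrev Program (Atom : Type) := Set (Rule Atom)

variable {Atom : Type} [DecidableEq Atom]

/-- The ordinary atoms occurring in a rule. -/
def Rule.atoms (r : Rule Atom) : Finset Atom :=
  r.head ∪ r.posOrd ∪ r.negOrd ∪
    ((r.posExt ++ r.negExt).foldr (fun e s => e.inputs ∪ s) ∅)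

/-- The ordinary atoms `A(Π)` occurring in a program. -/
def progAtoms (P : Program Atom) : Set Atom := ⋃ r ∈ P, (r.atoms : Set Atom)

/-- `A ∪̇¬ X`: set all atoms of `X` to false in `A`. -/
def unplug (A : Atom → Bool) (X : Finset Atom) : Atom → Bool :=
  fun a => A a && !(decide (a ∈ X))

/-- All body literals of `r` are true wrt. the complete assignment `B`. -/
def Rule.bodyTrueAt (r : Rule Atom) (B : Atom → Bool) : Prop :=
  (∀ a ∈ r.posOrd, B a = true) ∧ (∀ a ∈ r.negOrd, B a = false) ∧
  (∀ e ∈ r.posExt, e.eval B = true) ∧ (∀ e ∈ r.negExt, e.eval B = false)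

/-- Some body literal of `r` is false wrt. the complete assignment `B`. -/
def Rule.bodyFalseAt (r : Rule Atom) (B : Atom → Bool) : Prop :=
  (∃ a ∈ r.posOrd, B a = false) ∨ (∃ a ∈ r.negOrd, B a = true) ∨
  (∃ e ∈ r.posExt, e.eval B = false) ∨ (∃ e ∈ r.negExt, e.eval B = true)

/-- `X` is an unfounded set of `P` wrt. the complete assignment `A`
(Definition of unfounded sets for HEX-programs). -/
def isUnfounded (P : Program Atom) (A : Atom → Bool) (X : Finset Atom) : Prop :=
  ∀ r ∈ P, (r.head ∩ X).Nonempty →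
    r.bodyFalseAt A ∨ r.bodyFalseAt (unplug A X) ∨
    ∃ h ∈ r.head, h ∉ X ∧ A h = true

/-- `A` is a (complete) model of `P`. -/
def isModel (A : Atom → Bool) (P : Program Atom) : Prop :=
  ∀ r ∈ P, r.bodyTrueAt A → ∃ h ∈ r.head, A h = true

/-- Ordinary dependency `a → b`. -/
def ordDep (P : Program Atom) (a b : Atom) : Prop :=
  ∃ r ∈ P, a ∈ r.head ∧ b ∈ r.posOrd

/-- External dependency (e-edge) `a →ₑ b`. -/
def eDep (P : Program Atom) (a b : Atom) : Prop :=
  ∃ r ∈ P, a ∈ r.head ∧ ∃ e ∈ r.posExt ++ r.negExt, b ∈ e.inputs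

/-- The relation `→ᵈ = → ∪ →⁻¹ ∪ →ₑ`. -/
def dDep (P : Program Atom) (a b : Atom) : Prop :=
  ordDep P a b ∨ ordDep P b a ∨ eDep P a b

/-- `C` is a cut of the unfounded set `U`: `C ⊆ U`, `C` has no incoming or
internal e-edges from `U`, and there are no ordinary edges between `C` and
`U \ C` in either direction. -/
def isCut (P : Program Atom) (U C : Finset Atom) : Prop :=
  C ⊆ U ∧ (∀ a ∈ C, ∀ b ∈ U, ¬ eDep P b a) ∧
  (∀ a ∈ C, ∀ b ∈ U \ C, ¬ ordDep P a b ∧ ¬ ordDep P b a)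

/-- Some body literal of the rule corresponding to `r` in the guessing program
`Π̂` is false wrt. `B` extended to the compatible extension `Â` of `A`:
ordinary literals are evaluated at `B`, while external replacement atoms obtain
(by compatibility) the oracle value at `A`. -/
def Rule.bodyFalseHat (r : Rule Atom) (A B : Atom → Bool) : Prop :=
  (∃ a ∈ r.posOrd, B a = false) ∨ (∃ a ∈ r.negOrd, B a = true) ∨
  (∃ e ∈ r.posExt, e.eval A = false) ∨ (∃ e ∈ r.negExt, e.eval A = true)

/-- `X` (a set of ordinary atoms) is an unfounded set of the guessing program
`Π̂` wrt. the compatible extension `Â` of `A`.  Since `X` contains only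
ordinary atoms and the guessing rules have only replacement atoms in their
heads, this unfolds to the condition below, where replacement atoms keep their
(compatible) value under `Â ∪̇¬ X`. -/
def isUnfoundedHat (P : Program Atom) (A : Atom → Bool) (X : Finset Atom) : Prop :=
  ∀ r ∈ P, (r.head ∩ X).Nonempty →
    r.bodyFalseHat A A ∨ r.bodyFalseHat A (unplug A X) ∨
    ∃ h ∈ r.head, h ∉ X ∧ A h = true

/-- The set `S` contains a cycle under `→ᵈ` that uses at least one e-edge. -/
def hasECycleIn (P : Program Atom) (S : Set Atom) : Prop :=
  ∃ (n : ℕ) (c : ℕ → Atom),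
    (∀ i ≤ n, dDep P (c i) (c (i+1))) ∧ c 0 = c (n+1) ∧
    (∀ i ≤ n+1, c i ∈ S) ∧ ∃ i ≤ n, eDep P (c i) (c (i+1))

/-- `a` is a cyclic input atom: some `b` with `b →ₑ a` and a path from `a`
to `b` under `→ᵈ`. -/
def cyclicInput (P : Program Atom) (a : Atom) : Prop :=
  ∃ b, eDep P b a ∧ Relation.ReflTransGen (dDep P) a b

/-- The FLP-reduct `fΠ^A`. -/
def flpReduct (P : Program Atom) (A : Atom → Bool) : Program Atom :=
  { r ∈ P | r.bodyTrueAt A }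

/-- `A₁ ≤_Π A₂`. -/
def leP (P : Program Atom) (A₁ A₂ : Atom → Bool) : Prop :=
  ∀ a ∈ progAtoms P, A₁ a = true → A₂ a = true

/-- `A` is an answer set of `P`: a `≤_Π`-minimal model of the FLP-reduct. -/
def isAnswerSet (P : Program Atom) (A : Atom → Bool) : Prop :=
  isModel A (flpReduct P A) ∧
  ∀ A' : Atom → Bool, isModel A' (flpReduct P A) → leP P A' A → leP P A A'

/-- The dependency relation `→ ∪ →ₑ` used for strongly connected components. -/
def dep (P : Program Atom) (a b : Atom) : Prop := ordDep P a b ∨ eDep P a b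

/-- Mutual reachability under `→ ∪ →ₑ`. -/
def sameSCC (P : Program Atom) (a b : Atom) : Prop :=
  Relation.ReflTransGen (dep P) a b ∧ Relation.ReflTransGen (dep P) b a

/-- The strongly connected component of `a` under `→ ∪ →ₑ`. -/
def scc (P : Program Atom) (a : Atom) : Set Atom := { b | sameSCC P a b }

/-- The subprogram `Π_C` associated with a component `C`. -/
def subprog (P : Program Atom) (C : Set Atom) : Program Atom :=
  { r ∈ P | ∃ h ∈ r.head, h ∈ C }

/-- Unfoundedness of Cyclic Input Atoms: if a nonempty unfounded set `U` of
`Π` wrt. `A` contains no cyclic input atom, then `Π̂` has a nonempty unfounded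
set wrt. `Â`. -/
theorem cyclic_input_unfoundedness (P : Program Atom) (hP : P.Finite)
    (A : Atom → Bool) (U : Finset Atom) (hne : U.Nonempty)
    (hUatoms : ↑U ⊆ progAtoms P)
    (hU : isUnfounded P A U)
    (hnoca : ∀ a ∈ U, ¬ cyclicInput P a) :
    ∃ U' : Finset Atom, U'.Nonempty ∧ ↑U' ⊆ progAtoms P ∧
      isUnfoundedHat P A U' := by
  classical
  -- the symmetric ordinary-edge relation within U
  set S : Atom → Atom → Prop :=
    fun a b => a ∈ U ∧ b ∈ U ∧ (ordDep P a b ∨ ordDep P b a) with hSdef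
  have hSd : ∀ a b, S a b → dDep P a b := by
    rintro a b ⟨-, -, h | h⟩
    · exact Or.inl h
    · exact Or.inr (Or.inl h)
  have hSU : ∀ a b, a ∈ U → Relation.ReflTransGen S a b → b ∈ U := by
    intro a b ha h
    induction h with
    | refl => exact ha
    | tail _ hS _ => exact hS.2.1
  -- key step: there is a₀ ∈ U whose S-component has no outgoing e-edge into U
  have key : ∃ a₀ ∈ U, ∀ h, Relation.ReflTransGen S a₀ h →
      ∀ b ∈ U, ¬ eDep P h b := by
    by_contra hcon
    push_neg at hcon
    have hcon' : ∀ x : {x // x ∈ U}, ∃ y : {x // x ∈ U},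
        ∃ h, Relation.ReflTransGen S x.1 h ∧ eDep P h y.1 := by
      rintro ⟨x, hx⟩
      obtain ⟨h, hrt, b, hbU, he⟩ := hcon x hx
      exact ⟨⟨b, hbU⟩, h, hrt, he⟩
    choose F g hrt he using hcon'
    obtain ⟨a, haU⟩ := hne
    set seq : ℕ → {x // x ∈ U} := fun n => F^[n] ⟨a, haU⟩ with hseq
    have hFseq : ∀ n, seq (n+1) = F (seq n) := by
      intro n; simp [hseq, Function.iterate_succ_apply']
    have hstep : ∀ n, Relation.ReflTransGen (dDep P) (seq n).1 (seq (n+1)).1 := by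
      intro n
      have h1 : Relation.ReflTransGen (dDep P) (seq n).1 (g (seq n)) :=
        Relation.ReflTransGen.mono (fun a b h => hSd a b h) _ _ (hrt (seq n))
      have h2 : dDep P (g (seq n)) (seq (n+1)).1 := by
        rw [hFseq n]
        exact Or.inr (Or.inr (he (seq n)))
      exact h1.tail h2
    have hchain : ∀ i j, i ≤ j →
        Relation.ReflTransGen (dDep P) (seq i).1 (seq j).1 := by
      intro i j hij
      induction j with
      | zero =>
        have : i = 0 := Nat.le_zero.mp hij
        subst this; exact Relation.ReflTransGen.refl
      | succ j ih =>
        rcases Nat.lt_or_ge i (j+1) with hlt | hge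
        · exact (ih (Nat.lt_succ_iff.mp hlt)).trans (hstep j)
        · have : i = j + 1 := le_antisymm hij hge
          subst this; exact Relation.ReflTransGen.refl
    have hcyc : ∀ i j, i < j → seq i = seq j → False := by
      intro i j hlt heq
      apply hnoca (seq (i+1)).1 (seq (i+1)).2
      refine ⟨g (seq i), ?_, ?_⟩
      · have := he (seq i); rwa [← hFseq i] at this
      · have p1 : Relation.ReflTransGen (dDep P) (seq (i+1)).1 (seq j).1 :=
          hchain (i+1) j hlt
        have p2 : Relation.ReflTransGen (dDep P) (seq i).1 (g (seq i)) :=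
          Relation.ReflTransGen.mono (fun a b h => hSd a b h) _ _ (hrt (seq i))
        rw [← heq] at p1
        exact p1.trans p2
    obtain ⟨i, j, hij, heq⟩ := Finite.exists_ne_map_eq_of_infinite seq
    rcases Ne.lt_or_gt hij with hlt | hlt
    · exact hcyc i j hlt heq
    · exact hcyc j i hlt heq.symm
  obtain ⟨a₀, ha₀U, ha₀⟩ := key
  refine ⟨U.filter (fun b => Relation.ReflTransGen S a₀ b), ?_, ?_, ?_⟩
  · exact ⟨a₀, Finset.mem_filter.mpr ⟨ha₀U, Relation.ReflTransGen.refl⟩⟩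
  · exact Set.Subset.trans (by exact_mod_cast Finset.filter_subset _ U) hUatoms
  · intro r hr hheadC
    set C := U.filter (fun b => Relation.ReflTransGen S a₀ b) with hCdef
    have hCU : ∀ x, x ∈ C → x ∈ U := fun x hx => (Finset.mem_filter.mp hx).1
    obtain ⟨h, hh⟩ := hheadC
    have hh_head : h ∈ r.head := (Finset.mem_inter.mp hh).1
    have hhC : h ∈ C := (Finset.mem_inter.mp hh).2
    have hhU : h ∈ U := hCU h hhC
    have hhRT : Relation.ReflTransGen S a₀ h := (Finset.mem_filter.mp hhC).2
    have hheadU : (r.head ∩ U).Nonempty :=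
      ⟨h, Finset.mem_inter.mpr ⟨hh_head, hhU⟩⟩
    -- external atoms of r have no input in U
    have hext : ∀ e ∈ r.posExt ++ r.negExt, e.eval (unplug A U) = e.eval A := by
      intro e heR
      apply e.dep
      intro b hb
      have hbU : b ∉ U := by
        intro hbU
        exact ha₀ h hhRT b hbU ⟨r, hr, hh_head, e, heR, hb⟩
      simp [unplug, hbU]
    rcases hU r hr hheadU with hf | hf | ⟨h', hh', hnU, hA⟩
    · exact Or.inl hf
    · rcases hf with ⟨a, haP, hfa⟩ | ⟨a, haP, hfa⟩ | ⟨e, heP, hfe⟩ | ⟨e, heP, hfe⟩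
      · -- positive ordinary literal false under A ∪̇¬ U
        by_cases hAa : A a = false
        · exact Or.inl (Or.inl ⟨a, haP, hAa⟩)
        · have haU : a ∈ U := by
            by_contra haU
            simp [unplug, haU] at hfa
            exact hAa hfa
          have haC : a ∈ C := by
            refine Finset.mem_filter.mpr ⟨haU, hhRT.tail ?_⟩
            exact ⟨hhU, haU, Or.inl ⟨r, hr, hh_head, haP⟩⟩
          refine Or.inr (Or.inl (Or.inl ⟨a, haP, ?_⟩))
          simp [unplug, haC]
      · -- negative ordinary literal true under A ∪̇¬ U
        have hAa : A a = true ∧ a ∉ U := by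
          simpa [unplug, Bool.and_eq_true] using hfa
        have haC : a ∉ C := fun hc => hAa.2 (hCU a hc)
        refine Or.inr (Or.inl (Or.inr (Or.inl ⟨a, haP, ?_⟩)))
        simp [unplug, haC, hAa.1]
      · refine Or.inl (Or.inr (Or.inr (Or.inl ⟨e, heP, ?_⟩)))
        rw [← hext e (List.mem_append.mpr (Or.inl heP))]; exact hfe
      · refine Or.inl (Or.inr (Or.inr (Or.inr ⟨e, heP, ?_⟩)))
        rw [← hext e (List.mem_append.mpr (Or.inr heP))]; exact hfe
    · refine Or.inr (Or.inr ⟨h', hh', fun hc => hnU (hCU h' hc), hA⟩)
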